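/- Let G be a finite directed graph in which every chordless cycle is non-oriented (i.e., its arrows do not all point in a consistent cyclic direction). Then G is acyclic. -/

import Mathlib

/-- A chordless cycle in a directed graph `E` on `V`, recorded as the list
`c = [i_1, …, i_{d-1}]` of its (distinct) vertices: there is an edge (in either
direction) between two distinct vertices of `c` exactly when they are cyclically
consecutive. -/
def IsChordlessCycle {V : Type*} (E : V → V → Prop) (c : List V) : Prop :=
  3 ≤ c.length ∧ c.Nodup ∧
  ∀ j k : Fin c.length, j ≠ k →
    ((E (c.get j) (c.get k) ∨ E (c.get k) (c.get j)) ↔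
      ((j : ℕ) + 1 = k ∨ (k : ℕ) + 1 = j ∨
        ((j : ℕ) = 0 ∧ (k : ℕ) = c.length - 1) ∨
        ((k : ℕ) = 0 ∧ (j : ℕ) = c.length - 1)))

/-- A cycle (list of vertices) is oriented if all its arrows point consistently
in one cyclic direction. -/
def IsOrientedCycle {V : Type*} (E : V → V → Prop) (c : List V) : Prop :=
  (c.Chain' E ∧ ∀ h : c ≠ [], E (c.getLast h) (c.head h)) ∨
  (c.Chain' (flip E) ∧ ∀ h : c ≠ [], (flip E) (c.getLast h) (c.head h))

/-- A directed cycle: a nonempty directed closed walk from some vertex to itself. -/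
def HasDirectedCycle {V : Type*} (E : V → V → Prop) : Prop :=
  ∃ (v : V) (p : List V), p ≠ [] ∧ List.Chain E v p ∧ p.getLast? = some v


theorem List.chain'_iff_get {α : Type*} {R : α → α → Prop} {l : List α} :
    l.Chain' R ↔ ∀ (i : ℕ) (h : i < l.length - 1),
      R (l.get ⟨i, by omega⟩) (l.get ⟨i + 1, by omega⟩) := by
  constructor
  · intro h' i hi; exact List.isChain_iff_getElem.1 h' i (by omega)
  · intro h'; exact List.isChain_iff_getElem.2 fun i hi => h' i (by omega)

section Aux

variable {V : Type*} (E : V → V → Prop)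

/-- A directed cycle recorded as a nonempty list of vertices. -/
def CycAux (c : List V) : Prop :=
  ∃ a l, c = a :: l ∧ List.Chain E a (l ++ [a])

/-- Cyclic indexing into a nonempty list. -/
def nthc (c : List V) (h : 0 < c.length) (i : ℕ) : V :=
  c.get ⟨i % c.length, Nat.mod_lt _ h⟩

variable {E}

lemma nthc_congr {c : List V} (h : 0 < c.length) {i j : ℕ}
    (hij : i % c.length = j % c.length) : nthc c h i = nthc c h j := by
  unfold nthc; congr 1; exact Fin.ext hij

lemma nthc_get {c : List V} (h : 0 < c.length) (i : Fin c.length) :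
    c.get i = nthc c h i := by
  unfold nthc; congr 1; exact Fin.ext (Nat.mod_eq_of_lt i.2).symm

lemma nthc_head {c : List V} (a : V) (l : List V) (hc : c = a :: l)
    (h : 0 < c.length) : nthc c h 0 = a := by
  subst hc
  show (a :: l).get ⟨0 % (a :: l).length, _⟩ = a
  have : (0 : ℕ) % (a :: l).length = 0 := Nat.zero_mod _
  rw [show (⟨0 % (a :: l).length, Nat.mod_lt _ h⟩ : Fin (a :: l).length)
    = ⟨0, by simp⟩ from Fin.ext this]
  rfl

lemma get_append_nthc {c : List V} (h : 0 < c.length) {x : V}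
    (hx : x = nthc c h 0) (i : ℕ) (hi : i ≤ c.length) :
    (c ++ [x]).get ⟨i, by simp; omega⟩ = nthc c h i := by
  subst hx
  rcases Nat.lt_or_ge i c.length with h1 | h1
  · rw [List.get_eq_getElem, List.getElem_append_left h1]
    exact nthc_get h ⟨i, h1⟩
  · have hi' : i = c.length := by omega
    subst hi'
    have h2 : (c ++ [nthc c h 0]).get ⟨c.length, by simp⟩ = nthc c h 0 := by
      simp [List.getElem_append_right, List.getElem_concat_length]
    rw [h2]
    exact nthc_congr h (by simp)

/-- The cyclic-get characterization of `CycAux`. -/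
lemma cycAux_iff_nthc {c : List V} :
    CycAux E c ↔ ∃ h : 0 < c.length, ∀ i, E (nthc c h i) (nthc c h (i + 1)) := by
  constructor
  · rintro ⟨a, l, rfl, hch⟩
    have h : 0 < (a :: l).length := by simp
    refine ⟨h, fun i => ?_⟩
    set c := a :: l
    set d := c.length with hd
    -- reduce to i < d
    have key : ∀ i, i < d → E (nthc c h i) (nthc c h (i + 1)) := by
      intro i hi
      have hch' : List.Chain' E (c ++ [a]) := hch
      rw [List.chain'_iff_get] at hch'
      have hlen : (c ++ [a]).length = d + 1 := by simp [hd]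
      have := hch' i (by omega)
      have ha : a = nthc c h 0 := (nthc_head a l rfl h).symm
      rw [get_append_nthc h ha i (by omega), get_append_nthc h ha (i+1) (by omega)] at this
      exact this
    have h1 : nthc c h i = nthc c h (i % d) :=
      nthc_congr h (Nat.mod_mod_of_dvd i dvd_rfl).symm
    have h2 : nthc c h (i + 1) = nthc c h (i % d + 1) :=
      nthc_congr h (Nat.mod_add_mod i d 1).symm
    rw [h1, h2]
    exact key _ (Nat.mod_lt _ h)
  · rintro ⟨h, he⟩
    obtain ⟨a, l, rfl⟩ := List.exists_cons_of_ne_nil (List.ne_nil_of_length_pos h)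
    refine ⟨a, l, rfl, ?_⟩
    show List.Chain' E ((a :: l) ++ [a])
    set c := a :: l
    rw [List.chain'_iff_get]
    intro i hi
    have hlen : (c ++ [a]).length = c.length + 1 := by simp
    have hi' : i < c.length := by omega
    have ha : a = nthc c h 0 := (nthc_head a l rfl h).symm
    have := he i
    rw [← get_append_nthc h ha i (by omega), ← get_append_nthc h ha (i+1) (by omega)] at this
    exact this

lemma cycAux_pos {c : List V} (hc : CycAux E c) : 0 < c.length :=
  (cycAux_iff_nthc.1 hc).1

lemma nthc_rotate {c : List V} (h : 0 < c.length) (n : ℕ)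
    (h' : 0 < (c.rotate n).length) (i : ℕ) :
    nthc (c.rotate n) h' i = nthc c h (i + n) := by
  unfold nthc
  rw [List.get_rotate]
  congr 1
  apply Fin.ext
  show (i % (c.rotate n).length + n) % c.length = (i + n) % c.length
  rw [List.length_rotate]
  exact Nat.mod_add_mod i c.length n

lemma cycAux_rotate {c : List V} (hc : CycAux E c) (n : ℕ) :
    CycAux E (c.rotate n) := by
  rw [cycAux_iff_nthc] at hc ⊢
  obtain ⟨h, he⟩ := hc
  have h' : 0 < (c.rotate n).length := by simpa using h
  refine ⟨h', fun i => ?_⟩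
  rw [nthc_rotate h n h' i, nthc_rotate h n h' (i+1),
    show i + 1 + n = i + n + 1 from by omega]
  exact he (i + n)

lemma nthc_take {c : List V} (h : 0 < c.length) (m : ℕ) (h1 : 0 < m)
    (h2 : m ≤ c.length) (ht : 0 < (c.take m).length) (i : ℕ) (hi : i < m) :
    nthc (c.take m) ht i = nthc c h i := by
  unfold nthc
  have hlen : (c.take m).length = m := by simp; omega
  have e1 : i % (c.take m).length = i := by rw [hlen]; exact Nat.mod_eq_of_lt hi
  have e2 : i % c.length = i := Nat.mod_eq_of_lt (by omega)
  rw [show (⟨i % (c.take m).length, Nat.mod_lt _ ht⟩ : Fin (c.take m).length)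
    = ⟨i, by omega⟩ from Fin.ext e1]
  rw [show (⟨i % c.length, Nat.mod_lt _ h⟩ : Fin c.length)
    = ⟨i, by omega⟩ from Fin.ext e2]
  simp

/-- Shortcut: an initial segment of a cycle whose last vertex points back to
the head is again a cycle. -/
lemma cycAux_take {c : List V} (hc : CycAux E c) (m : ℕ) (h1 : 0 < m)
    (h2 : m ≤ c.length)
    (he : E (nthc c (cycAux_pos hc) (m - 1)) (nthc c (cycAux_pos hc) 0)) :
    CycAux E (c.take m) := by
  obtain ⟨h, hE⟩ := cycAux_iff_nthc.1 hc
  rw [cycAux_iff_nthc]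
  have hlen : (c.take m).length = m := by simp; omega
  have ht : 0 < (c.take m).length := by omega
  refine ⟨ht, fun i => ?_⟩
  -- reduce to i < m
  have key : ∀ i, i < m → E (nthc (c.take m) ht i) (nthc (c.take m) ht (i + 1)) := by
    intro i hi
    rcases Nat.lt_or_ge (i + 1) m with h3 | h3
    · rw [nthc_take h m h1 h2 ht i hi, nthc_take h m h1 h2 ht (i+1) h3]
      exact hE i
    · have hi1 : i = m - 1 := by omega
      subst hi1
      have e0 : nthc (c.take m) ht (m - 1 + 1) = nthc (c.take m) ht 0 :=
        nthc_congr ht (by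
          rw [hlen, show m - 1 + 1 = m from by omega, Nat.mod_self, Nat.zero_mod])
      rw [e0, nthc_take h m h1 h2 ht (m-1) (by omega),
        nthc_take h m h1 h2 ht 0 (by omega)]
      exact he
  have e1 : nthc (c.take m) ht i = nthc (c.take m) ht (i % m) :=
    nthc_congr ht (by rw [hlen]; exact (Nat.mod_mod_of_dvd i dvd_rfl).symm)
  have e2 : nthc (c.take m) ht (i + 1) = nthc (c.take m) ht (i % m + 1) :=
    nthc_congr ht (by rw [hlen]; exact (Nat.mod_add_mod i m 1).symm)
  rw [e1, e2]
  exact key _ (Nat.mod_lt _ h1)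

end Aux

section Aux2

variable {V : Type*} {E : V → V → Prop}

/-- A chord pointing from position `j` to position `k` (where `k` is not the
cyclic successor of `j`) yields a strictly shorter cycle. -/
lemma cycAux_shortcut {c : List V} (hc : CycAux E c) (h : 0 < c.length)
    (j k : ℕ) (hj : j < c.length) (hk : k < c.length) (hjk : j ≠ k)
    (he : E (nthc c h j) (nthc c h k))
    (h1 : j + 1 ≠ k) (h2 : ¬ (k = 0 ∧ j = c.length - 1)) :
    ∃ t : List V, CycAux E t ∧ t.length < c.length := by
  have h2' : k ≠ 0 ∨ j ≠ c.length - 1 := not_and_or.mp h2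
  have key : ∀ m : ℕ, 1 ≤ m → m + 2 ≤ c.length →
      (m + k) % c.length = j % c.length →
      ∃ t : List V, CycAux E t ∧ t.length < c.length := by
    intro m hm1 hm2 hmk
    have hc' : CycAux E (c.rotate k) := cycAux_rotate hc k
    have h' : 0 < (c.rotate k).length := cycAux_pos hc'
    have hval : nthc (c.rotate k) h' m = nthc c h j := by
      rw [nthc_rotate h k h' m]
      exact nthc_congr h hmk
    have hval0 : nthc (c.rotate k) h' 0 = nthc c h k := by
      rw [nthc_rotate h k h' 0, Nat.zero_add]
    have he' : E (nthc (c.rotate k) (cycAux_pos hc') (m + 1 - 1))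
        (nthc (c.rotate k) (cycAux_pos hc') 0) := by
      show E (nthc (c.rotate k) h' (m + 1 - 1)) (nthc (c.rotate k) h' 0)
      rw [show m + 1 - 1 = m from rfl, hval, hval0]
      exact he
    refine ⟨(c.rotate k).take (m + 1),
      cycAux_take hc' (m + 1) (by omega) (by rw [List.length_rotate]; omega) he', ?_⟩
    have : ((c.rotate k).take (m + 1)).length = m + 1 := by
      simp [List.length_rotate]; omega
    omega
  rcases le_or_gt k j with hkj | hkj
  · refine key (j - k) (by omega) (by rcases h2' with h' | h' <;> omega) ?_
    rw [show j - k + k = j from by omega]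
  · refine key (j + c.length - k) (by omega) (by omega) ?_
    rw [show j + c.length - k + k = j + c.length from by omega, Nat.add_mod_right]

end Aux2

/-- a finite directed graph (without loops or 2-cycles) in which
every chordless cycle is non-oriented is acyclic. -/
theorem stmt13 {V : Type*} [Fintype V] (E : V → V → Prop)
    (hirr : ∀ v, ¬ E v v)
    (hasym : ∀ a b, E a b → ¬ E b a)
    (hchordless : ∀ c : List V, IsChordlessCycle E c → ¬ IsOrientedCycle E c) :
    ¬ HasDirectedCycle E := by
  rintro ⟨v, p, hp, hchain, hlast⟩
  -- there is a cycle, in the `CycAux` sense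
  have hex : ∃ n, ∃ c : List V, CycAux E c ∧ c.length = n := by
    refine ⟨_, v :: p.dropLast, ⟨v, p.dropLast, rfl, ?_⟩, rfl⟩
    have h1 : p.getLast hp = v := by
      rw [List.getLast?_eq_getLast hp] at hlast
      exact Option.some.inj hlast
    have h2 : p.dropLast ++ [v] = p := by
      rw [← h1]; exact List.dropLast_append_getLast hp
    rw [h2]; exact hchain
  classical
  -- take a cycle of minimal length
  obtain ⟨c, hc, hcn⟩ := Nat.find_spec hex
  have hmin : ∀ t : List V, CycAux E t → Nat.find hex ≤ t.length :=
    fun t ht => Nat.find_min' hex ⟨t, ht, rfl⟩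
  obtain ⟨h, hE⟩ := cycAux_iff_nthc.1 hc
  set d := c.length with hd
  -- length at least 3
  have hd1 : d ≠ 1 := by
    intro h1
    refine hirr (nthc c h 0) ?_
    have := hE 0
    rwa [nthc_congr h (i := 0 + 1) (j := 0) (by rw [← hd, h1])] at this
  have hd2 : d ≠ 2 := by
    intro h2
    have e1 := hE 0
    have e2 := hE 1
    rw [nthc_congr h (i := 1 + 1) (j := 0) (by rw [← hd, h2])] at e2
    exact hasym _ _ e1 e2
  have hd3 : 3 ≤ d := by omega
  -- no repeated vertices
  have hnodup : c.Nodup := by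
    have key : ∀ i j : Fin c.length, c.get i = c.get j → (i : ℕ) < (j : ℕ) → False := by
      intro i j hij hlt
      have hc' : CycAux E (c.rotate (i : ℕ)) := cycAux_rotate hc (i : ℕ)
      have h' : 0 < (c.rotate (i : ℕ)).length := cycAux_pos hc'
      obtain ⟨h'', hE'⟩ := cycAux_iff_nthc.1 hc'
      set m : ℕ := (j : ℕ) - (i : ℕ) with hm
      have hm1 : 1 ≤ m := by omega
      have hm2 : m < d := by have := j.2; omega
      have hval : nthc (c.rotate (i : ℕ)) h' m = nthc (c.rotate (i : ℕ)) h' 0 := by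
        rw [nthc_rotate h _ h' m, nthc_rotate h _ h' 0, Nat.zero_add,
          show m + (i : ℕ) = (j : ℕ) from by omega, ← nthc_get h j, ← nthc_get h i, hij]
      have he' : E (nthc (c.rotate (i : ℕ)) (cycAux_pos hc') (m - 1))
          (nthc (c.rotate (i : ℕ)) (cycAux_pos hc') 0) := by
        show E (nthc (c.rotate (i : ℕ)) h' (m - 1)) (nthc (c.rotate (i : ℕ)) h' 0)
        have := hE' (m - 1)
        rwa [show m - 1 + 1 = m from by omega, hval] at this
      have ht := cycAux_take hc' m (by omega) (by rw [List.length_rotate]; omega) he'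
      have hlt' := hmin _ ht
      have : (List.take m (c.rotate (i : ℕ))).length = m := by
        simp [List.length_rotate]; omega
      omega
    rw [List.nodup_iff_injective_get]
    intro i j hij
    by_contra hne
    rcases Nat.lt_trichotomy (i : ℕ) (j : ℕ) with h' | h' | h'
    · exact key i j hij h'
    · exact hne (Fin.ext h')
    · exact key j i hij.symm h'
  -- chordless
  have hchord : IsChordlessCycle E c := by
    refine ⟨hd3, hnodup, fun j k hjk => ⟨?_, ?_⟩⟩
    · -- edge implies cyclic adjacency
      intro hedge
      by_contra hadj
      push_neg at hadj
      obtain ⟨a1, a2, a3, a4⟩ := hadj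
      have hvne : (j : ℕ) ≠ (k : ℕ) := fun hh => hjk (Fin.ext hh)
      rcases hedge with hedge | hedge
      · obtain ⟨t, ht, htl⟩ := cycAux_shortcut hc h (j : ℕ) (k : ℕ) j.2 k.2 hvne
          (by rwa [nthc_get h j, nthc_get h k] at hedge) a1
          (by intro hh; exact (a4 hh.1) hh.2)
        have := hmin t ht
        omega
      · obtain ⟨t, ht, htl⟩ := cycAux_shortcut hc h (k : ℕ) (j : ℕ) k.2 j.2 (Ne.symm hvne)
          (by rwa [nthc_get h k, nthc_get h j] at hedge) a2
          (by intro hh; exact (a3 hh.1) hh.2)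
        have := hmin t ht
        omega
    · -- cyclic adjacency implies edge
      intro hadj
      rcases hadj with h1 | h1 | ⟨h1, h2⟩ | ⟨h1, h2⟩
      · left
        rw [nthc_get h j, nthc_get h k, ← h1]
        exact hE (j : ℕ)
      · right
        rw [nthc_get h j, nthc_get h k, ← h1]
        exact hE (k : ℕ)
      · right
        rw [nthc_get h j, nthc_get h k]
        have := hE (k : ℕ)
        rwa [nthc_congr h (i := (k : ℕ) + 1) (j := (j : ℕ)) (by
          rw [h1, h2, show d - 1 + 1 = d from by omega, ← hd, Nat.mod_self, Nat.zero_mod])]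
          at this
      · left
        rw [nthc_get h j, nthc_get h k]
        have := hE (j : ℕ)
        rwa [nthc_congr h (i := (j : ℕ) + 1) (j := (k : ℕ)) (by
          rw [h1, h2, show d - 1 + 1 = d from by omega, ← hd, Nat.mod_self, Nat.zero_mod])]
          at this
  -- oriented
  have horient : IsOrientedCycle E c := by
    left
    constructor
    · rw [List.chain'_iff_get]
      intro i hi
      rw [nthc_get h ⟨i, by omega⟩, nthc_get h ⟨i + 1, by omega⟩]
      exact hE i
    · intro hne
      rw [show c.getLast hne = c.get ⟨d - 1, by omega⟩ from List.getLast_eq_getElem hne]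
      have hhead : c.head hne = c.get ⟨0, h⟩ := by
        rw [List.get_eq_getElem, List.head_eq_getElem_zero]
      rw [hhead, nthc_get h ⟨d - 1, by omega⟩, nthc_get h ⟨0, h⟩]
      have := hE (d - 1)
      rwa [nthc_congr h (i := d - 1 + 1) (j := 0) (by
        rw [show d - 1 + 1 = d from by omega, ← hd, Nat.mod_self, Nat.zero_mod])] at this
  exact hchordless c hchord horient
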